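/- Let b ∈ GF(2^{nk})* and consider f(x) = x^{2^k+1} + b² x + b² and g(x) = b^{2^k} x^{2^{2k}-1} + b² x^{2^k-1} + b over GF(2^{nk}). Then exactly one of the following holds: (i) f has 0 or 2 zeros in GF(2^{nk}) and g has 0 zeros; (ii) f has exactly 1 zero and g has exactly 2^k - 1 zeros; (iii) f has exactly 2^k + 1 zeros and g has exactly 2^{2k} - 1 zeros. -/

import Mathlib

open Finset

lemma aux_count {F : Type*} [Field F] [Fintype F] [DecidableEq F]
    {m r : ℕ} (hm : 0 < m) (hr : 0 < r)
    (hcard : Fintype.card F - 1 = m * r) (a : F) (ha : a ≠ 0) :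
    (a ^ r = 1 ↔ ∃ u : F, u ^ m = a) ∧
    (a ^ r = 1 → (Finset.univ.filter (fun x : F => x ^ m = a)).card = m) := by
  obtain ⟨g, hg⟩ := IsCyclic.exists_generator (α := Fˣ)
  have hog : orderOf g = Fintype.card F - 1 := by
    rw [orderOf_eq_card_of_forall_mem_zpowers hg, Nat.card_eq_fintype_card,
      Fintype.card_units]
  have hprim : IsPrimitiveRoot (g : F) (Fintype.card F - 1) := by
    rw [← hog]
    exact IsPrimitiveRoot.coe_units_iff.mpr (IsPrimitiveRoot.orderOf g)
  have hpos : 0 < Fintype.card F - 1 := by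
    rw [hcard]; exact Nat.mul_pos hm hr
  -- primitive m-th root : (g)^r
  have hηm : IsPrimitiveRoot ((g : F) ^ r) m :=
    hprim.pow hpos (by rw [hcard, mul_comm])
  have hηr : IsPrimitiveRoot ((g : F) ^ m) r :=
    hprim.pow hpos hcard
  constructor
  · constructor
    · intro har
      have h1 : a ∈ Polynomial.nthRoots r (1 : F) := by
        rw [Polynomial.mem_nthRoots hr, har]
      rw [hηr.nthRoots_eq (one_pow r)] at h1
      rw [Multiset.mem_map] at h1
      obtain ⟨j, _, hj⟩ := h1
      exact ⟨(g : F) ^ j, by rw [← hj, mul_one, ← pow_mul, ← pow_mul, mul_comm j m]⟩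
    · rintro ⟨u, rfl⟩
      have hu : u ≠ 0 := by
        rintro rfl
        exact ha (zero_pow hm.ne')
      rw [← pow_mul, ← hcard, FiniteField.pow_card_sub_one_eq_one u hu]
  · intro har
    have hex : ∃ α : F, α ^ m = a := by
      have h1 : a ∈ Polynomial.nthRoots r (1 : F) := by
        rw [Polynomial.mem_nthRoots hr, har]
      rw [hηr.nthRoots_eq (one_pow r)] at h1
      rw [Multiset.mem_map] at h1
      obtain ⟨j, _, hj⟩ := h1
      exact ⟨(g : F) ^ j, by rw [← hj, mul_one, ← pow_mul, ← pow_mul, mul_comm j m]⟩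
    have hset : Finset.univ.filter (fun x : F => x ^ m = a)
        = (Polynomial.nthRoots m a).toFinset := by
      ext x
      simp [Polynomial.mem_nthRoots hm]
    rw [hset, Multiset.toFinset_card_of_nodup (hηm.nthRoots_nodup ha),
      hηm.card_nthRoots a, if_pos hex]

section Main
variable {F : Type*} [Field F] [Fintype F] [DecidableEq F]

lemma main_lemma {q n : ℕ} (hq : 2 ≤ q) (hn : 1 ≤ n)
    (hcard : Fintype.card F = q ^ n)
    (h2 : (2 : F) = 0)
    (frob : ∀ x y : F, (x + y) ^ q = x ^ q + y ^ q)
    (b : F) (hb : b ≠ 0) :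
    (((univ.filter fun y : F => y ^ (q + 1) + b ^ 2 * y + b ^ 2 = 0).card = 0 ∨
        (univ.filter fun y : F => y ^ (q + 1) + b ^ 2 * y + b ^ 2 = 0).card = 2) ∧
      (univ.filter fun x : F =>
        b ^ q * x ^ (q ^ 2 - 1) + b ^ 2 * x ^ (q - 1) + b = 0).card = 0) ∨
    ((univ.filter fun y : F => y ^ (q + 1) + b ^ 2 * y + b ^ 2 = 0).card = 1 ∧
      (univ.filter fun x : F =>
        b ^ q * x ^ (q ^ 2 - 1) + b ^ 2 * x ^ (q - 1) + b = 0).card = q - 1) ∨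
    ((univ.filter fun y : F => y ^ (q + 1) + b ^ 2 * y + b ^ 2 = 0).card = q + 1 ∧
      (univ.filter fun x : F =>
        b ^ q * x ^ (q ^ 2 - 1) + b ^ 2 * x ^ (q - 1) + b = 0).card = q ^ 2 - 1) := by
  classical
  have hq1 : 1 ≤ q := by omega
  have hq0 : q ≠ 0 := by omega
  have hq10 : q - 1 ≠ 0 := by omega
  have hq21 : 1 ≤ q ^ 2 := Nat.one_le_pow _ _ (by omega)
  have hq210 : q ^ 2 - 1 ≠ 0 := by
    have : 2 ^ 2 ≤ q ^ 2 := Nat.pow_le_pow_left hq 2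
    omega
  -- char-2 facts
  have hmove : ∀ u v : F, u + v = 0 → u = v := by
    intro u v h; linear_combination h - v * h2
  have hselfadd : ∀ u : F, u + u = 0 := by
    intro u; linear_combination u * h2
  have hsqone : ∀ u : F, u ^ 2 = 1 → u = 1 := by
    intro u h
    have h3 : (u - 1) ^ 2 = 0 := by linear_combination h + (1 - u) * h2
    exact sub_eq_zero.mp (pow_eq_zero_iff (n := 2) (by norm_num) |>.mp h3)
  -- the divisor s
  have hdvd : (q - 1) ∣ (q ^ n - 1) := by
    simpa using Nat.sub_dvd_pow_sub_pow q 1 n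
  obtain ⟨s, hs⟩ := hdvd
  have hQpos : 1 ≤ q ^ n - 1 := by
    have : q ≤ q ^ n := Nat.le_self_pow (by omega) q
    omega
  have hspos : 0 < s := by
    rcases Nat.eq_zero_or_pos s with h | h
    · rw [h, mul_zero] at hs; omega
    · exact h
  have hcard1 : Fintype.card F - 1 = (q - 1) * s := by rw [hcard]; omega
  have hQ1 : ∀ x : F, x ≠ 0 → x ^ (q ^ n - 1) = 1 := by
    intro x hx
    have := FiniteField.pow_card_sub_one_eq_one x hx
    rwa [hcard] at this
  -- abbreviations
  set Rf : Finset F := univ.filter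
    (fun y : F => y ^ (q + 1) + b ^ 2 * y + b ^ 2 = 0) with hRf
  set Rg : Finset F := univ.filter
    (fun x : F => b ^ q * x ^ (q ^ 2 - 1) + b ^ 2 * x ^ (q - 1) + b = 0) with hRg
  set Rt : Finset F := Rf.filter (fun y => y ^ s = b ^ s) with hRt
  have hb2 : b ^ 2 ≠ 0 := pow_ne_zero _ hb
  -- root nonzero
  have hy0 : ∀ y : F, y ^ (q + 1) + b ^ 2 * y + b ^ 2 = 0 → y ≠ 0 := by
    intro y hy h0
    apply hb2
    rw [h0] at hy
    simpa using hy
  -- y * (y^q + b^2) = b^2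
  have hyb : ∀ y : F, y ^ (q + 1) + b ^ 2 * y + b ^ 2 = 0 →
      y * (y ^ q + b ^ 2) = b ^ 2 := by
    intro y hy
    linear_combination hy - b ^ 2 * h2
  -- x * g(x) = L(x)
  have hLx : ∀ x : F, x * (b ^ q * x ^ (q ^ 2 - 1) + b ^ 2 * x ^ (q - 1) + b) =
      b ^ q * x ^ (q ^ 2) + b ^ 2 * x ^ q + b * x := by
    intro x
    have e1 : x * x ^ (q ^ 2 - 1) = x ^ (q ^ 2) := by
      rw [← pow_succ', Nat.sub_add_cancel hq21]
    have e2 : x * x ^ (q - 1) = x ^ q := by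
      rw [← pow_succ', Nat.sub_add_cancel hq1]
    linear_combination b ^ q * e1 + b ^ 2 * e2
  -- x * f(b x^{q-1}) = b * L(x)
  have hfρ : ∀ x : F, x * ((b * x ^ (q - 1)) ^ (q + 1) + b ^ 2 * (b * x ^ (q - 1)) + b ^ 2)
      = b * (b ^ q * x ^ (q ^ 2) + b ^ 2 * x ^ q + b * x) := by
    intro x
    have eexp : (q - 1) * (q + 1) + 1 = q ^ 2 := by
      cases' Nat.exists_eq_add_of_le hq with m hm
      subst hm
      have h' : 2 + m - 1 = m + 1 := by omega
      rw [h']; ring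
    have e1 : x * (x ^ (q - 1)) ^ (q + 1) = x ^ (q ^ 2) := by
      rw [← pow_mul, ← pow_succ', eexp]
    have e2 : x * x ^ (q - 1) = x ^ q := by
      rw [← pow_succ', Nat.sub_add_cancel hq1]
    have e3 : (b * x ^ (q - 1)) ^ (q + 1) = b ^ (q + 1) * (x ^ (q - 1)) ^ (q + 1) :=
      mul_pow _ _ _
    rw [e3]
    linear_combination b ^ (q + 1) * e1 + b ^ 3 * e2
  -- membership in Rg
  have hmemRg : ∀ x : F, x ∈ Rg ↔ x ≠ 0 ∧ b ^ q * x ^ (q ^ 2) + b ^ 2 * x ^ q + b * x = 0 := by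
    intro x
    rw [hRg, mem_filter]
    simp only [mem_univ, true_and]
    constructor
    · intro hx
      have hx0 : x ≠ 0 := by
        rintro rfl
        simp only [zero_pow hq210, zero_pow hq10, mul_zero, zero_add] at hx
        exact hb hx
      refine ⟨hx0, ?_⟩
      rw [← hLx x, hx, mul_zero]
    · rintro ⟨hx0, hL⟩
      have := hLx x
      rw [hL] at this
      rcases mul_eq_zero.mp this with h | h
      · exact absurd h hx0
      · exact h
  -- image of Rg lands in Rt
  have htofib : ∀ x ∈ Rg, b * x ^ (q - 1) ∈ Rt := by
    intro x hx
    obtain ⟨hx0, hL⟩ := (hmemRg x).mp hx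
    have hf : (b * x ^ (q - 1)) ^ (q + 1) + b ^ 2 * (b * x ^ (q - 1)) + b ^ 2 = 0 := by
      have := hfρ x
      rw [hL, mul_zero] at this
      rcases mul_eq_zero.mp this with h | h
      · exact absurd h hx0
      · exact h
    have hnorm : (b * x ^ (q - 1)) ^ s = b ^ s := by
      rw [mul_pow, ← pow_mul, ← hs, hQ1 x hx0, mul_one]
    rw [hRt, mem_filter, hRf, mem_filter]
    exact ⟨⟨mem_univ _, hf⟩, hnorm⟩
  -- fibers have q - 1 elements
  have hfibcard : ∀ y ∈ Rt, (Rg.filter fun x => b * x ^ (q - 1) = y).card = q - 1 := by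
    intro y hy
    rw [hRt, mem_filter] at hy
    obtain ⟨hyf, hys⟩ := hy
    rw [hRf, mem_filter] at hyf
    have hyf : y ^ (q + 1) + b ^ 2 * y + b ^ 2 = 0 := hyf.2
    have hy0' : y ≠ 0 := hy0 y hyf
    have ha0 : y * b⁻¹ ≠ 0 := mul_ne_zero hy0' (inv_ne_zero hb)
    have hset : (Rg.filter fun x => b * x ^ (q - 1) = y)
        = univ.filter (fun x : F => x ^ (q - 1) = y * b⁻¹) := by
      ext x
      simp only [mem_filter, mem_univ, true_and]
      constructor
      · rintro ⟨hxg, hxy⟩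
        field_simp [← hxy]
        rw [← hxy]; ring
      · intro hxa
        have hx0 : x ≠ 0 := by
          rintro rfl
          rw [zero_pow hq10] at hxa
          exact ha0 hxa.symm
        have hby : b * x ^ (q - 1) = y := by
          rw [hxa]
          field_simp
        refine ⟨(hmemRg x).mpr ⟨hx0, ?_⟩, hby⟩
        have := hfρ x
        rw [hby, hyf, mul_zero] at this
        rcases mul_eq_zero.mp this.symm with h | h
        · exact absurd h hb
        · exact h
    rw [hset]
    have has : (y * b⁻¹) ^ s = 1 := by
      rw [mul_pow, inv_pow, hys, mul_inv_cancel₀ (pow_ne_zero _ hb)]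
    exact (aux_count (by omega) hspos hcard1 (y * b⁻¹) ha0).2 has
  -- total count : |Rg| = |Rt| * (q-1)
  have hFC : Rg.card = Rt.card * (q - 1) := by
    rw [card_eq_sum_card_fiberwise htofib]
    rw [Finset.sum_congr rfl hfibcard, Finset.sum_const, smul_eq_mul]
  -- expansion of f(y+z) for a root y
  have hexpand : ∀ y z : F, y ^ (q + 1) + b ^ 2 * y + b ^ 2 = 0 →
      (y + z) ^ (q + 1) + b ^ 2 * (y + z) + b ^ 2 =
        z ^ (q + 1) + y * z ^ q + (y ^ q + b ^ 2) * z := by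
    intro y z hy
    have e : (y + z) ^ (q + 1) = (y ^ q + z ^ q) * (y + z) := by
      rw [pow_succ, frob]
    rw [e]
    have ey : y ^ (q + 1) = y ^ q * y := pow_succ y q
    have ez : z ^ (q + 1) = z ^ q * z := pow_succ z q
    linear_combination hy + ey - ez
  -- STAR : other roots ↔ solutions of T w = 1
  have hSTAR : ∀ y ∈ Rf, (Rf.erase y).card =
      (univ.filter fun w : F => (y ^ q + b ^ 2) * w ^ q + y * w = 1).card := by
    intro y hyRf
    rw [hRf, mem_filter] at hyRf
    have hyf : y ^ (q + 1) + b ^ 2 * y + b ^ 2 = 0 := hyRf.2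
    refine card_bij' (fun y' _ => (y + y')⁻¹) (fun w _ => y + w⁻¹) ?_ ?_ ?_ ?_
    · -- forward map lands in solutions
      intro y' hy'
      rw [mem_erase, hRf, mem_filter] at hy'
      obtain ⟨hne, -, hy'f⟩ := hy'
      have he0 : y + y' ≠ 0 := by
        intro h
        exact hne (hmove y y' h).symm
      set e := y + y' with hedef
      have hyy : y + e = y' := by
        rw [hedef]; linear_combination y * h2
      have heq : e ^ (q + 1) + y * e ^ q + (y ^ q + b ^ 2) * e = 0 := by
        have := hexpand y e hyf
        rw [hyy] at this
        linear_combination hy'f - this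
      show (y + y')⁻¹ ∈ _
      rw [mem_filter]
      refine ⟨mem_univ _, ?_⟩
      rw [inv_pow]
      field_simp
      have he1 : y + y' ≠ 0 := he0
      rw [div_add_div _ _ (pow_ne_zero _ he1) he1, div_eq_one_iff_eq (mul_ne_zero (pow_ne_zero _ he1) he1)]
      linear_combination heq - e ^ (q + 1) * h2
    · -- backward map lands in erase
      intro w hw
      rw [mem_filter] at hw
      have hT : (y ^ q + b ^ 2) * w ^ q + y * w = 1 := hw.2
      have hw0 : w ≠ 0 := by
        rintro rfl
        rw [zero_pow hq0, mul_zero, mul_zero, add_zero] at hT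
        exact one_ne_zero hT.symm
      show y + w⁻¹ ∈ Rf.erase y
      rw [mem_erase, hRf, mem_filter]
      refine ⟨?_, mem_univ _, ?_⟩
      · intro h
        have : w⁻¹ = 0 := by
          have := hselfadd y
          -- y + w⁻¹ = y → w⁻¹ = 0
          have h3 : y + w⁻¹ = y + 0 := by rw [h, add_zero]
          exact add_left_cancel h3
        exact inv_ne_zero hw0 this
      · rw [hexpand y w⁻¹ hyf, inv_pow]
        field_simp
        rw [one_div, inv_pow]
        field_simp
        linear_combination (w ^ (q + 1)) * hT + w ^ (q + 1) * h2
    · intro y' hy'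
      show y + ((y + y')⁻¹)⁻¹ = y'
      rw [inv_inv]
      linear_combination y * h2
    · intro w hw
      show (y + (y + w⁻¹))⁻¹ = w
      have h4 : y + (y + w⁻¹) = w⁻¹ := by linear_combination y * h2
      rw [h4, inv_inv]
  -- kernel counting
  have hKER : ∀ y : F, y ^ (q + 1) + b ^ 2 * y + b ^ 2 = 0 →
      (univ.filter fun w : F => (y ^ q + b ^ 2) * w ^ q + y * w = 0).card
        = if y ^ s = b ^ s then q else 1 := by
    intro y hyf
    have hy0' : y ≠ 0 := hy0 y hyf
    have hybc : y * (y ^ q + b ^ 2) = b ^ 2 := hyb y hyf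
    have hc0 : y ^ q + b ^ 2 ≠ 0 := by
      intro h
      rw [h, mul_zero] at hybc
      exact hb2 hybc.symm
    set c := y ^ q + b ^ 2 with hcdef
    set a := y ^ 2 * (b ^ 2)⁻¹ with hadef
    have ha0 : a ≠ 0 := mul_ne_zero (pow_ne_zero _ hy0') (inv_ne_zero hb2)
    have hca : c * a = y := by
      rw [hadef]
      field_simp
      linear_combination hybc
    have hsetK : (univ.filter fun w : F => c * w ^ q + y * w = 0)
        = insert (0 : F) (univ.filter fun w : F => w ^ (q - 1) = a) := by
      ext w
      simp only [mem_insert, mem_filter, mem_univ, true_and]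
      constructor
      · intro hw
        by_cases hw0 : w = 0
        · exact Or.inl hw0
        · right
          have hq' : w ^ q = w ^ (q - 1) * w := by
            rw [← pow_succ, Nat.sub_add_cancel hq1]
          rw [hq'] at hw
          have : c * w ^ (q - 1) = y := by
            have h5 : (c * w ^ (q - 1) + y) * w = 0 := by linear_combination hw
            rcases mul_eq_zero.mp h5 with h | h
            · exact hmove _ _ h
            · exact absurd h hw0
          have h7 : c * w ^ (q - 1) = c * a := by rw [this, hca]
          exact mul_left_cancel₀ hc0 h7
      · intro hw
        rcases hw with rfl | hw
        · rw [zero_pow hq0, mul_zero, mul_zero, add_zero]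
        · have hw0 : w ≠ 0 := by
            rintro rfl
            rw [zero_pow hq10] at hw
            exact ha0 hw.symm
          have hq' : w ^ q = w ^ (q - 1) * w := by
            rw [← pow_succ, Nat.sub_add_cancel hq1]
          rw [hq', hw]
          have : c * a = y := hca
          linear_combination w * this + y * w * h2
    have h0notin : (0 : F) ∉ (univ.filter fun w : F => w ^ (q - 1) = a) := by
      simp only [mem_filter, mem_univ, true_and]
      rw [zero_pow hq10]
      exact fun h => ha0 h.symm
    rw [hsetK, card_insert_of_notMem h0notin]
    by_cases hcase : y ^ s = b ^ s
    · rw [if_pos hcase]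
      have has : a ^ s = 1 := by
        rw [hadef, mul_pow, inv_pow, ← pow_mul, ← pow_mul, mul_comm 2 s, pow_mul, pow_mul,
          hcase, mul_inv_cancel₀ (pow_ne_zero _ (pow_ne_zero _ hb))]
      rw [(aux_count (by omega) hspos hcard1 a ha0).2 has]
      omega
    · rw [if_neg hcase]
      have hempty : (univ.filter fun w : F => w ^ (q - 1) = a) = ∅ := by
        rw [Finset.eq_empty_iff_forall_notMem]
        intro w hw
        rw [mem_filter] at hw
        have hw' : w ^ (q - 1) = a := hw.2
        have hw0 : w ≠ 0 := by
          rintro rfl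
          rw [zero_pow hq10] at hw'
          exact ha0 hw'.symm
        have has : a ^ s = 1 := by
          rw [← hw', ← pow_mul, ← hs, hQ1 w hw0]
        -- derive y ^ s = b ^ s
        apply hcase
        have h6 : (y ^ s * (b ^ s)⁻¹) ^ 2 = 1 := by
          rw [mul_pow, inv_pow, ← pow_mul, ← pow_mul, mul_comm s 2]
          rw [hadef, mul_pow, inv_pow, ← pow_mul, ← pow_mul] at has
          exact has
        have := hsqone _ h6
        field_simp at this
        exact this
      rw [hempty, card_empty]
  -- additivity of T
  have hTadd : ∀ y w w' : F, (y ^ q + b ^ 2) * (w + w') ^ q + y * (w + w') =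
      ((y ^ q + b ^ 2) * w ^ q + y * w) + ((y ^ q + b ^ 2) * w' ^ q + y * w') := by
    intro y w w'
    rw [frob]
    ring
  -- if S nonempty then |S| = |K|
  have hAFF : ∀ y : F,
      (univ.filter fun w : F => (y ^ q + b ^ 2) * w ^ q + y * w = 1).Nonempty →
      (univ.filter fun w : F => (y ^ q + b ^ 2) * w ^ q + y * w = 1).card =
      (univ.filter fun w : F => (y ^ q + b ^ 2) * w ^ q + y * w = 0).card := by
    intro y hS
    obtain ⟨w1, hw1⟩ := hS
    rw [mem_filter] at hw1
    have hw1 : (y ^ q + b ^ 2) * w1 ^ q + y * w1 = 1 := hw1.2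
    symm
    refine card_bij' (fun w _ => w + w1) (fun v _ => v + w1) ?_ ?_ ?_ ?_
    · intro w hw
      rw [mem_filter] at hw ⊢
      refine ⟨mem_univ _, ?_⟩
      rw [hTadd, hw.2, hw1, zero_add]
    · intro v hv
      rw [mem_filter] at hv ⊢
      refine ⟨mem_univ _, ?_⟩
      rw [hTadd, hv.2, hw1]
      linear_combination h2
    · intro w hw
      show w + w1 + w1 = w
      linear_combination w1 * h2
    · intro v hv
      show v + w1 + w1 = v
      linear_combination w1 * h2
  -- if |K| = 1 then S is nonempty
  have hK1S : ∀ y : F,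
      (univ.filter fun w : F => (y ^ q + b ^ 2) * w ^ q + y * w = 0).card = 1 →
      (univ.filter fun w : F => (y ^ q + b ^ 2) * w ^ q + y * w = 1).Nonempty := by
    intro y hK
    have h0K : (0 : F) ∈ (univ.filter fun w : F => (y ^ q + b ^ 2) * w ^ q + y * w = 0) := by
      rw [mem_filter]
      refine ⟨mem_univ _, ?_⟩
      rw [zero_pow hq0, mul_zero, mul_zero, add_zero]
    obtain ⟨z, hz⟩ := Finset.card_eq_one.mp hK
    have hz0 : z = 0 := by
      have := h0K
      rw [hz, Finset.mem_singleton] at this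
      exact this.symm
    subst hz0
    -- T is injective
    have hinj : Function.Injective (fun w : F => (y ^ q + b ^ 2) * w ^ q + y * w) := by
      intro w w' hww
      simp only at hww
      have hsum : (y ^ q + b ^ 2) * (w + w') ^ q + y * (w + w') = 0 := by
        rw [hTadd, hww]
        exact hselfadd _
      have : w + w' ∈ (univ.filter fun w : F => (y ^ q + b ^ 2) * w ^ q + y * w = 0) := by
        rw [mem_filter]; exact ⟨mem_univ _, hsum⟩
      rw [hz, Finset.mem_singleton] at this
      exact hmove w w' this
    have hsurj := Finite.surjective_of_injective hinj
    obtain ⟨w, hw⟩ := hsurj 1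
    exact ⟨w, by rw [mem_filter]; exact ⟨mem_univ _, hw⟩⟩
  -- ===== assembly =====
  rcases Finset.eq_empty_or_nonempty Rf with hRfe | ⟨y, hyRf⟩
  · -- no roots of f
    have hRte : Rt = ∅ := by
      rw [hRt, hRfe, Finset.filter_empty]
    left
    constructor
    · left; rw [hRfe, card_empty]
    · rw [hFC, hRte, card_empty, zero_mul]
  · have hyf : y ^ (q + 1) + b ^ 2 * y + b ^ 2 = 0 := by
      have := hyRf; rw [hRf, mem_filter] at this; exact this.2
    have hstar := hSTAR y hyRf
    rw [Finset.card_erase_of_mem hyRf] at hstar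
    have hcard_pos : 1 ≤ Rf.card := Finset.card_pos.mpr ⟨y, hyRf⟩
    by_cases hSe : (univ.filter fun w : F => (y ^ q + b ^ 2) * w ^ q + y * w = 1) = ∅
    · -- N = 1
      have hN1 : Rf.card = 1 := by
        rw [hSe, card_empty] at hstar
        omega
      have hKnot1 : (univ.filter fun w : F => (y ^ q + b ^ 2) * w ^ q + y * w = 0).card ≠ 1 := by
        intro h
        obtain ⟨w, hw⟩ := hK1S y h
        rw [hSe] at hw
        exact absurd hw (Finset.notMem_empty w)
      have hys : y ^ s = b ^ s := by
        by_contra hys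
        rw [hKER y hyf, if_neg hys] at hKnot1
        exact hKnot1 rfl
      have hRteq : Rt = {y} := by
        have hRfy : Rf = {y} := by
          obtain ⟨z, hz⟩ := Finset.card_eq_one.mp hN1
          have hyz : y = z := by
            have h8 := hyRf
            rw [hz, Finset.mem_singleton] at h8
            exact h8
          rw [hz, hyz]
        rw [hRt, hRfy]
        ext u
        simp only [Finset.mem_filter, Finset.mem_singleton]
        constructor
        · tauto
        · rintro rfl; exact ⟨rfl, hys⟩
      right; left
      constructor
      · exact hN1
      · rw [hFC, hRteq, Finset.card_singleton, one_mul]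
    · -- S nonempty
      have hSne : (univ.filter fun w : F => (y ^ q + b ^ 2) * w ^ q + y * w = 1).Nonempty :=
        Finset.nonempty_iff_ne_empty.mpr hSe
      have hSK := hAFF y hSne
      -- key : for every root y', N - 1 = (if y'^s = b^s then q else 1)
      have hall : ∀ y' ∈ Rf, Rf.card - 1 = if y' ^ s = b ^ s then q else 1 := by
        intro y' hy'Rf
        have hy'f : y' ^ (q + 1) + b ^ 2 * y' + b ^ 2 = 0 := by
          have := hy'Rf; rw [hRf, mem_filter] at this; exact this.2
        have hstar' := hSTAR y' hy'Rf
        rw [Finset.card_erase_of_mem hy'Rf] at hstar'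
        have hSne' : (univ.filter fun w : F =>
            (y' ^ q + b ^ 2) * w ^ q + y' * w = 1).Nonempty := by
          rw [← Finset.card_pos, ← hstar']
          have h1 : 1 ≤ (univ.filter fun w : F =>
              (y ^ q + b ^ 2) * w ^ q + y * w = 1).card := Finset.card_pos.mpr hSne
          omega
        rw [hstar', hAFF y' hSne', hKER y' hy'f]
      have hNval := hall y hyRf
      by_cases hys : y ^ s = b ^ s
      · -- N = q + 1 case
        rw [if_pos hys] at hNval
        have hN : Rf.card = q + 1 := by omega
        have hRteq : Rt = Rf := by
          rw [hRt]
          apply Finset.filter_true_of_mem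
          intro y' hy'
          have := hall y' hy'
          by_contra hne
          rw [if_neg hne] at this
          omega
        right; right
        refine ⟨hN, ?_⟩
        rw [hFC, hRteq, hN]
        have hqsq : q ^ 2 = (q + 1) * (q - 1) + 1 := by
          cases' Nat.exists_eq_add_of_le hq with m hm
          subst hm
          have h' : 2 + m - 1 = m + 1 := by omega
          rw [h']
          ring
        omega
      · -- N = 2 case
        rw [if_neg hys] at hNval
        have hN : Rf.card = 2 := by omega
        have hRte : Rt = ∅ := by
          rw [Finset.eq_empty_iff_forall_notMem]
          intro u hu
          rw [hRt, mem_filter] at hu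
          have h9 := hall u hu.1
          rw [if_pos hu.2] at h9
          omega
        left
        refine ⟨Or.inr hN, ?_⟩
        rw [hFC, hRte, card_empty, zero_mul]
end Main

theorem stmt9 (n k : ℕ) (hn : 1 ≤ n) (hk : 1 ≤ k)
    (F : Type*) [Field F] [Fintype F] (hF : Fintype.card F = 2 ^ (n * k))
    (b : F) (hb : b ≠ 0) :
    ((Nat.card {x : F // x ^ (2 ^ k + 1) + b ^ 2 * x + b ^ 2 = 0} = 0 ∨
        Nat.card {x : F // x ^ (2 ^ k + 1) + b ^ 2 * x + b ^ 2 = 0} = 2) ∧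
      Nat.card {x : F // b ^ (2 ^ k) * x ^ (2 ^ (2 * k) - 1) +
        b ^ 2 * x ^ (2 ^ k - 1) + b = 0} = 0) ∨
    (Nat.card {x : F // x ^ (2 ^ k + 1) + b ^ 2 * x + b ^ 2 = 0} = 1 ∧
      Nat.card {x : F // b ^ (2 ^ k) * x ^ (2 ^ (2 * k) - 1) +
        b ^ 2 * x ^ (2 ^ k - 1) + b = 0} = 2 ^ k - 1) ∨
    (Nat.card {x : F // x ^ (2 ^ k + 1) + b ^ 2 * x + b ^ 2 = 0} = 2 ^ k + 1 ∧
      Nat.card {x : F // b ^ (2 ^ k) * x ^ (2 ^ (2 * k) - 1) +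
        b ^ 2 * x ^ (2 ^ k - 1) + b = 0} = 2 ^ (2 * k) - 1) := by
  classical
  obtain ⟨p, hp⟩ := CharP.exists F
  haveI := hp
  obtain ⟨np, hprime, hcardp⟩ := FiniteField.card F p
  have hp2 : p = 2 := by
    have hdvd : p ∣ 2 ^ (n * k) := by
      rw [← hF, hcardp]
      exact dvd_pow_self p (by positivity)
    have hdvd2 : p ∣ 2 := Nat.Prime.dvd_of_dvd_pow hprime hdvd
    exact (Nat.prime_dvd_prime_iff_eq hprime Nat.prime_two).mp hdvd2
  subst hp2
  haveI : Fact (Nat.Prime 2) := ⟨Nat.prime_two⟩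
  have h2 : (2 : F) = 0 := by
    have := CharP.cast_eq_zero F 2
    exact_mod_cast this
  have frob : ∀ x y : F, (x + y) ^ 2 ^ k = x ^ 2 ^ k + y ^ 2 ^ k := fun x y =>
    add_pow_char_pow x y 2 k
  have hq : 2 ≤ 2 ^ k := by
    calc 2 = 2 ^ 1 := (pow_one 2).symm
    _ ≤ 2 ^ k := Nat.pow_le_pow_right (by norm_num) hk
  have hcard' : Fintype.card F = (2 ^ k) ^ n := by
    rw [hF, ← pow_mul, mul_comm]
  have hexp : 2 ^ (2 * k) = (2 ^ k) ^ 2 := by rw [← pow_mul, mul_comm]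
  have hmain := main_lemma hq hn hcard' h2 frob b hb
  simp only [hexp]
  simp only [Nat.card_eq_fintype_card, Fintype.card_subtype]
  exact hmain
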